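/- If G is a k-regular simple graph on n vertices, then E(G) ≤ k + √(k(n−1)(n−k)). -/

import Mathlib

open Matrix in
lemma sum_sq_eigenvalues_eq_trace {n : Type*} [Fintype n] [DecidableEq n]
    {A : Matrix n n ℝ} (hA : A.IsHermitian) :
    ∑ i, hA.eigenvalues i ^ 2 = (A * A).trace := by
  set U : Matrix n n ℝ := (hA.eigenvectorUnitary : Matrix n n ℝ) with hUdef
  have hU : star U * U = 1 := Unitary.coe_star_mul_self hA.eigenvectorUnitary
  have hspec := hA.spectral_theorem
  have hofReal : (RCLike.ofReal ∘ hA.eigenvalues : n → ℝ) = hA.eigenvalues := rfl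
  rw [hofReal] at hspec
  rw [Unitary.conjStarAlgAut_apply, ← hUdef] at hspec
  calc ∑ i, hA.eigenvalues i ^ 2
      = (diagonal hA.eigenvalues * diagonal hA.eigenvalues).trace := by
        rw [diagonal_mul_diagonal, trace_diagonal]
        simp [sq]
    _ = (A * A).trace := by
        conv_rhs => rw [hspec]
        rw [show (U * diagonal hA.eigenvalues * star U) * (U * diagonal hA.eigenvalues * star U)
            = U * (diagonal hA.eigenvalues * ((star U * U) * diagonal hA.eigenvalues)) * star U by
          noncomm_ring]
        rw [hU, one_mul, trace_mul_cycle, hU, one_mul]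

open Matrix in
lemma exists_eigenvalue_eq {n : Type*} [Fintype n] [DecidableEq n]
    {A : Matrix n n ℝ} (hA : A.IsHermitian) {x : n → ℝ} (hx : x ≠ 0) {μ : ℝ}
    (hAx : A *ᵥ x = μ • x) : ∃ i, hA.eigenvalues i = μ := by
  set U : Matrix n n ℝ := (hA.eigenvectorUnitary : Matrix n n ℝ) with hUdef
  have hU : star U * U = 1 := Unitary.coe_star_mul_self hA.eigenvectorUnitary
  have hUU : U * star U = 1 := (Matrix.mem_unitaryGroup_iff).mp hA.eigenvectorUnitary.2
  have hdet : (A - μ • 1).det = 0 := by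
    rw [← Matrix.exists_mulVec_eq_zero_iff]
    refine ⟨x, hx, ?_⟩
    rw [sub_mulVec, smul_mulVec, one_mulVec, hAx, sub_self]
  have hofReal : (RCLike.ofReal ∘ hA.eigenvalues : n → ℝ) = hA.eigenvalues := rfl
  have hspec := hA.spectral_theorem
  rw [hofReal] at hspec
  rw [Unitary.conjStarAlgAut_apply, ← hUdef] at hspec
  have key : A - μ • 1 = U * (diagonal hA.eigenvalues - μ • 1) * star U := by
    rw [mul_sub, sub_mul, ← hspec]
    rw [Matrix.mul_smul, mul_one, Matrix.smul_mul, hUU]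
  rw [key] at hdet
  have hdetU : U.det * (star U).det = 1 := by
    rw [← det_mul, (Matrix.mem_unitaryGroup_iff).mp hA.eigenvectorUnitary.2, det_one]
  rw [det_mul, det_mul] at hdet
  have : (diagonal hA.eigenvalues - μ • 1).det = 0 := by
    calc (diagonal hA.eigenvalues - μ • 1).det
        = (diagonal hA.eigenvalues - μ • 1).det * (U.det * (star U).det) := by
          rw [hdetU, mul_one]
      _ = U.det * (diagonal hA.eigenvalues - μ • 1).det * (star U).det := by ring
      _ = 0 := hdet
  rw [smul_one_eq_diagonal, diagonal_sub, det_diagonal] at this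
  obtain ⟨i, _, hi⟩ := Finset.prod_eq_zero_iff.mp this
  exact ⟨i, by linarith [sub_eq_zero.mp hi]⟩



/-- The adjacency matrix of a simple graph over `ℝ` is Hermitian. -/
theorem SimpleGraph.adjMatrix_isHermitian {V : Type*} [Fintype V] (G : SimpleGraph V)
    [DecidableRel G.Adj] : (G.adjMatrix ℝ).IsHermitian := by
  rw [Matrix.IsHermitian, Matrix.conjTranspose_eq_transpose_of_trivial]
  exact SimpleGraph.isSymm_adjMatrix G

/-- The eigenvalues of the (real, symmetric) adjacency matrix of a simple graph,
indexed by the vertex set (listed with multiplicity). -/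
noncomputable def SimpleGraph.adjEigenvalues {V : Type*} [Fintype V] [DecidableEq V]
    (G : SimpleGraph V) : V → ℝ :=
  letI := Classical.decRel G.Adj
  (G.adjMatrix_isHermitian).eigenvalues

/-- The energy of a simple graph: the sum of the absolute values of the
eigenvalues of its adjacency matrix. -/
noncomputable def SimpleGraph.energy {V : Type*} [Fintype V] [DecidableEq V]
    (G : SimpleGraph V) : ℝ :=
  ∑ v, |G.adjEigenvalues v|

/-- The degree of a vertex in a simple graph (defined classically). -/
noncomputable def SimpleGraph.degree' {V : Type*} [Fintype V] (G : SimpleGraph V) (v : V) : ℕ :=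
  letI := Classical.decRel G.Adj
  G.degree v

/-- If `G` is a `k`-regular simple graph on `n` vertices, then
`E(G) ≤ k + √(k(n-1)(n-k))`. -/
theorem energy_le_of_isRegular {V : Type*} [Fintype V] [DecidableEq V]
    (G : SimpleGraph V) (k : ℕ) (hreg : ∀ v, G.degree' v = k) :
    G.energy ≤ (k : ℝ) +
      Real.sqrt ((k : ℝ) * ((Fintype.card V : ℝ) - 1) * ((Fintype.card V : ℝ) - (k : ℝ))) := by
  letI := Classical.decRel G.Adj
  rcases isEmpty_or_nonempty V with hV | hV
  · have h0 : G.energy = 0 := by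
      simp [SimpleGraph.energy, Finset.univ_eq_empty]
    rw [h0]
    positivity
  · set A := G.adjMatrix ℝ with hAdef
    have hA : A.IsHermitian := G.adjMatrix_isHermitian
    have heig : G.adjEigenvalues = hA.eigenvalues := rfl
    have hreg' : ∀ v, G.degree v = k := hreg
    set n := Fintype.card V with hn
    have hn1 : 1 ≤ n := Fintype.card_pos
    -- sum of squares of eigenvalues
    have hT : ∑ i, hA.eigenvalues i ^ 2 = (n : ℝ) * (k : ℝ) := by
      rw [sum_sq_eigenvalues_eq_trace hA]
      have : (A * A).trace = ∑ i : V, ((A * A) i i) := rfl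
      rw [this]
      have : ∀ i : V, (A * A) i i = (k : ℝ) := by
        intro i
        rw [hAdef, G.adjMatrix_mul_self_apply_self i, hreg' i]
      rw [Finset.sum_congr rfl fun i _ => this i]
      simp [Finset.card_univ, mul_comm]
      exact Or.inl rfl
    -- k is an eigenvalue
    have hx : (Function.const V (1 : ℝ)) ≠ 0 := by
      intro h
      exact one_ne_zero (congrFun h (Classical.arbitrary V))
    have hAx : Matrix.mulVec A (Function.const V (1 : ℝ)) = (k : ℝ) • (Function.const V (1 : ℝ)) := by
      funext v
      rw [hAdef, SimpleGraph.adjMatrix_mulVec_const_apply]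
      simp [hreg' v]
    obtain ⟨v₀, hv₀⟩ := exists_eigenvalue_eq hA hx hAx
    set lam := hA.eigenvalues with hlam
    set s : Finset V := Finset.univ.erase v₀ with hs
    have hcard : (s.card : ℝ) = (n : ℝ) - 1 := by
      rw [hs, Finset.card_erase_of_mem (Finset.mem_univ v₀), Finset.card_univ, ← hn,
        Nat.cast_sub hn1, Nat.cast_one]
    have hsum_sq_s : ∑ v ∈ s, lam v ^ 2 = (n : ℝ) * (k : ℝ) - (k : ℝ) ^ 2 := by
      have h2 : lam v₀ ^ 2 + ∑ x ∈ Finset.univ.erase v₀, lam x ^ 2 = ∑ i, lam i ^ 2 :=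
        Finset.add_sum_erase Finset.univ (fun v => lam v ^ 2) (Finset.mem_univ v₀)
      rw [hT] at h2
      have hv₀sq : lam v₀ ^ 2 = (k : ℝ) ^ 2 := by rw [hv₀]
      rw [hs]
      linarith [h2, hv₀sq]
    have hrest : ∑ v ∈ s, |lam v| ≤
        Real.sqrt ((k : ℝ) * ((n : ℝ) - 1) * ((n : ℝ) - (k : ℝ))) := by
      apply Real.le_sqrt_of_sq_le
      calc (∑ v ∈ s, |lam v|) ^ 2 ≤ (s.card : ℝ) * ∑ v ∈ s, |lam v| ^ 2 :=
            sq_sum_le_card_mul_sum_sq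
        _ = ((n : ℝ) - 1) * ((n : ℝ) * (k : ℝ) - (k : ℝ) ^ 2) := by
            rw [hcard]
            congr 1
            rw [← hsum_sq_s]
            exact Finset.sum_congr rfl fun v _ => sq_abs _
        _ = (k : ℝ) * ((n : ℝ) - 1) * ((n : ℝ) - (k : ℝ)) := by ring
    have henergy : G.energy = |lam v₀| + ∑ v ∈ s, |lam v| :=
      (Finset.add_sum_erase Finset.univ (fun v => |lam v|) (Finset.mem_univ v₀)).symm
    rw [henergy, hv₀, Nat.abs_cast]
    exact add_le_add le_rfl hrest
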